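/- Let Φ_L(x) = e^{−6x}·e^{−2πe^{−x}}·Π_{n=1}^∞ (1 − e^{−2πn e^{−x}})^{24} for x ∈ ℝ. Then for every complex number z with |Im(z)| < 6, the function x ↦ Φ_L(x)·e^{izx} is integrable on ℝ, and the function ψ_L(z) = ∫_{−∞}^{∞} Φ_L(x) e^{izx} dx is holomorphic on the horizontal strip {z ∈ ℂ : |Im(z)| < 6}. -/

import Mathlib

open Real MeasureTheory Set Filter

/-- The Fourier kernel of the completed Ramanujan L-function:
`Φ_L(x) = e^{−6x} e^{−2πe^{−x}} Π_{n=1}^∞ (1 − e^{−2πn e^{−x}})^{24}`. -/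
noncomputable def RamanujanPhi (x : ℝ) : ℝ :=
  Real.exp (-6 * x) * Real.exp (-2 * π * Real.exp (-x))
    * ∏' n : ℕ, (1 - Real.exp (-2 * π * ((n : ℝ) + 1) * Real.exp (-x))) ^ 24

lemma rp_term_lt_one (x : ℝ) (n : ℕ) :
    Real.exp (-2 * π * ((n : ℝ) + 1) * Real.exp (-x)) < 1 := by
  apply Real.exp_lt_one_iff.mpr
  have : (0:ℝ) < ((n:ℝ)+1) := by positivity
  nlinarith [Real.pi_pos, Real.exp_pos (-x), mul_pos (mul_pos Real.pi_pos this) (Real.exp_pos (-x))]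

lemma rp_term_eq (x : ℝ) (n : ℕ) :
    Real.exp (-2 * π * ((n : ℝ) + 1) * Real.exp (-x))
      = Real.exp (-(2 * π * Real.exp (-x))) ^ (n + 1) := by
  rw [← Real.exp_nat_mul]
  congr 1
  push_cast
  ring

lemma rp_factor_pos (x : ℝ) (n : ℕ) :
    0 < (1 - Real.exp (-2 * π * ((n : ℝ) + 1) * Real.exp (-x))) ^ 24 := by
  have h := rp_term_lt_one x n
  have h0 := (Real.exp_pos (-2 * π * ((n : ℝ) + 1) * Real.exp (-x))).le
  exact pow_pos (by linarith) 24

lemma rp_summable_log (x : ℝ) :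
    Summable fun n : ℕ =>
      Real.log ((1 - Real.exp (-2 * π * ((n : ℝ) + 1) * Real.exp (-x))) ^ 24) := by
  set r : ℝ := Real.exp (-(2 * π * Real.exp (-x))) with hrdef
  have hr0 : 0 < r := Real.exp_pos _
  have hr1 : r < 1 := by
    apply Real.exp_lt_one_iff.mpr
    nlinarith [Real.pi_pos, Real.exp_pos (-x), mul_pos Real.pi_pos (Real.exp_pos (-x))]
  apply Summable.of_norm
  have hle : ∀ n : ℕ, ‖Real.log ((1 - Real.exp (-2 * π * ((n : ℝ) + 1) * Real.exp (-x))) ^ 24)‖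
      ≤ (24 / (1 - r)) * r ^ (n+1) := by
    intro n
    rw [rp_term_eq]
    have hpow_le : r ^ (n+1) ≤ r := by
      simpa using pow_le_pow_of_le_one hr0.le hr1.le (Nat.one_le_iff_ne_zero.mpr (Nat.succ_ne_zero n))
    have hy0 : 0 < 1 - r ^ (n+1) := by nlinarith
    have hy1 : 1 - r ^ (n+1) ≤ 1 := by nlinarith [pow_nonneg hr0.le (n+1)]
    rw [Real.log_pow]
    have hlog_nonpos : Real.log (1 - r ^ (n+1)) ≤ 0 := Real.log_nonpos (by positivity) hy1
    have habs : ‖(24:ℕ) * Real.log (1 - r ^ (n+1))‖ = 24 * (-Real.log (1 - r ^ (n+1))) := by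
      rw [Real.norm_eq_abs, abs_mul]
      simp [abs_of_nonpos hlog_nonpos]
    rw [habs]
    have hkey : -Real.log (1 - r ^ (n+1)) ≤ r ^ (n+1) / (1 - r) := by
      have h1 : -Real.log (1 - r ^ (n+1)) = Real.log (1 - r ^ (n+1))⁻¹ := by
        rw [Real.log_inv]
      rw [h1]
      have h2 : Real.log (1 - r ^ (n+1))⁻¹ ≤ (1 - r ^ (n+1))⁻¹ - 1 :=
        Real.log_le_sub_one_of_pos (by positivity)
      have h3 : (1 - r ^ (n+1))⁻¹ - 1 = r ^ (n+1) / (1 - r ^ (n+1)) := by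
        field_simp
        ring
      rw [h3] at h2
      refine h2.trans ?_
      apply div_le_div_of_nonneg_left (by positivity) (by nlinarith) (by nlinarith)
    calc 24 * (-Real.log (1 - r ^ (n+1))) ≤ 24 * (r ^ (n+1) / (1 - r)) := by nlinarith
      _ = (24 / (1 - r)) * r ^ (n+1) := by ring
  apply Summable.of_nonneg_of_le (fun n => norm_nonneg _) hle
  apply Summable.mul_left
  exact ((summable_geometric_of_lt_one hr0.le hr1).mul_left r).congr (fun n => by ring)

lemma rp_multipliable (x : ℝ) :
    Multipliable fun n : ℕ =>
      (1 - Real.exp (-2 * π * ((n : ℝ) + 1) * Real.exp (-x))) ^ 24 :=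
  Real.multipliable_of_summable_log (fun n => rp_factor_pos x n) (rp_summable_log x)

lemma rp_prod_nonneg (x : ℝ) :
    0 ≤ ∏' n : ℕ, (1 - Real.exp (-2 * π * ((n : ℝ) + 1) * Real.exp (-x))) ^ 24 :=
  ge_of_tendsto' (rp_multipliable x).hasProd
    (fun s => Finset.prod_nonneg fun n _ => (rp_factor_pos x n).le)

lemma rp_prod_le_one (x : ℝ) :
    (∏' n : ℕ, (1 - Real.exp (-2 * π * ((n : ℝ) + 1) * Real.exp (-x))) ^ 24) ≤ 1 :=
  le_of_tendsto' (rp_multipliable x).hasProd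
    (fun s => Finset.prod_le_one (fun n _ => (rp_factor_pos x n).le)
      (fun n _ => by
        have := rp_term_lt_one x n
        have h0 := (Real.exp_pos (-2 * π * ((n : ℝ) + 1) * Real.exp (-x))).le
        calc (1 - Real.exp (-2 * π * ((n : ℝ) + 1) * Real.exp (-x))) ^ 24
            ≤ 1 ^ 24 := pow_le_pow_left₀ (by nlinarith) (by nlinarith) 24
          _ = 1 := one_pow 24))

lemma rp_prod_sm :
    StronglyMeasurable fun x : ℝ =>
      ∏' n : ℕ, (1 - Real.exp (-2 * π * ((n : ℝ) + 1) * Real.exp (-x))) ^ 24 := by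
  apply stronglyMeasurable_of_tendsto (f := fun (m : ℕ) (x : ℝ) =>
    ∏ n ∈ Finset.range m, (1 - Real.exp (-2 * π * ((n : ℝ) + 1) * Real.exp (-x))) ^ 24) atTop
  · intro m
    apply Continuous.stronglyMeasurable
    fun_prop
  · rw [tendsto_pi_nhds]
    intro x
    exact (rp_multipliable x).hasProd.tendsto_prod_nat

lemma rp_sm : StronglyMeasurable RamanujanPhi := by
  unfold RamanujanPhi
  exact ((Continuous.stronglyMeasurable (by fun_prop)).mul
    (Continuous.stronglyMeasurable (by fun_prop))).mul rp_prod_sm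

lemma rp_nonneg (x : ℝ) : 0 ≤ RamanujanPhi x :=
  mul_nonneg (mul_nonneg (Real.exp_pos _).le (Real.exp_pos _).le) (rp_prod_nonneg x)

lemma rp_le (x : ℝ) : RamanujanPhi x ≤ Real.exp (-(6 * |x|)) := by
  have h1 : RamanujanPhi x ≤ Real.exp (-6 * x) * Real.exp (-2 * π * Real.exp (-x)) := by
    unfold RamanujanPhi
    nlinarith [rp_prod_le_one x, rp_prod_nonneg x,
      mul_pos (Real.exp_pos (-6 * x)) (Real.exp_pos (-2 * π * Real.exp (-x)))]
  refine h1.trans ?_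
  rw [← Real.exp_add]
  apply Real.exp_le_exp.mpr
  rcases le_or_gt 0 x with hx | hx
  · rw [abs_of_nonneg hx]
    nlinarith [Real.exp_pos (-x), Real.pi_pos]
  · rw [abs_of_neg hx]
    have h2 : Real.exp (-x) = Real.exp (-x - 1) * Real.exp 1 := by
      rw [← Real.exp_add]; ring_nf
    have h3 : -x ≤ Real.exp (-x - 1) := by
      nlinarith [Real.add_one_le_exp (-x - 1)]
    have hπ : (3:ℝ) < π := Real.pi_gt_three
    have he : (2:ℝ) ≤ Real.exp 1 := by nlinarith [Real.add_one_le_exp (1:ℝ)]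
    have hp : (0:ℝ) < Real.exp (-x - 1) := Real.exp_pos _
    have h4 : 12 * (-x) ≤ 2 * π * Real.exp (-x) := by
      calc 12 * (-x) ≤ 12 * Real.exp (-x - 1) := by nlinarith
        _ ≤ (2 * π * Real.exp 1) * Real.exp (-x - 1) := by
            have h12 : (12:ℝ) ≤ 2 * π * Real.exp 1 := by
              nlinarith [mul_nonneg (sub_nonneg.mpr hπ.le) (sub_nonneg.mpr he)]
            nlinarith [mul_le_mul_of_nonneg_right h12 hp.le]
        _ = 2 * π * Real.exp (-x) := by rw [h2]; ring
    linarith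

lemma integrable_exp_neg_mul_abs {a : ℝ} (ha : 0 < a) :
    Integrable (fun x : ℝ => Real.exp (-(a * |x|))) := by
  have h1 : IntegrableOn (fun x : ℝ => Real.exp (-(a * |x|))) (Ici 0) := by
    rw [integrableOn_Ici_iff_integrableOn_Ioi]
    refine (exp_neg_integrableOn_Ioi 0 ha).congr_fun (fun x hx => ?_) measurableSet_Ioi
    rw [abs_of_nonneg (le_of_lt hx)]; ring_nf
  have h2 : IntegrableOn (fun x : ℝ => Real.exp (-(a * |x|))) (Iic 0) := by
    rw [← Measure.map_neg_eq_self (volume : Measure ℝ)]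
    have m : MeasurableEmbedding fun x : ℝ => -x :=
      (Homeomorph.neg ℝ).measurableEmbedding
    rw [m.integrableOn_map_iff]
    simp_rw [Function.comp_def, abs_neg, neg_preimage, neg_Iic, neg_zero]
    exact h1
  rw [← integrableOn_univ, ← Iic_union_Ici (a := (0:ℝ))]
  exact h2.union h1

lemma rp_norm_le (z : ℂ) (x : ℝ) :
    ‖(RamanujanPhi x : ℂ) * Complex.exp (Complex.I * z * x)‖
      ≤ Real.exp (-((6 - |z.im|) * |x|)) := by
  rw [norm_mul, Complex.norm_real, Complex.norm_exp]
  have hre : (Complex.I * z * x).re = -z.im * x := by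
    simp [Complex.mul_re, Complex.mul_im]
  rw [hre, Real.norm_eq_abs, abs_of_nonneg (rp_nonneg x)]
  calc RamanujanPhi x * Real.exp (-z.im * x)
      ≤ Real.exp (-(6 * |x|)) * Real.exp (|z.im| * |x|) := by
        apply mul_le_mul (rp_le x) (Real.exp_le_exp.mpr ?_) (Real.exp_pos _).le
          (Real.exp_pos _).le
        calc -z.im * x ≤ |(-z.im) * x| := le_abs_self _
          _ = |z.im| * |x| := by rw [abs_mul, abs_neg]
    _ = Real.exp (-((6 - |z.im|) * |x|)) := by rw [← Real.exp_add]; ring_nf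

theorem ramanujan_psi_integrable_holomorphic_on_strip :
    (∀ z : ℂ, |z.im| < 6 → Integrable (fun x : ℝ =>
      (RamanujanPhi x : ℂ) * Complex.exp (Complex.I * z * x))) ∧
    DifferentiableOn ℂ
      (fun z : ℂ => ∫ x : ℝ, (RamanujanPhi x : ℂ) * Complex.exp (Complex.I * z * x))
      {z : ℂ | |z.im| < 6} := by
  have hmeas : ∀ z : ℂ, AEStronglyMeasurable (fun x : ℝ =>
      (RamanujanPhi x : ℂ) * Complex.exp (Complex.I * z * x)) volume := by
    intro z
    exact ((Complex.continuous_ofReal.comp_stronglyMeasurable rp_sm).mul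
      (Continuous.stronglyMeasurable (by fun_prop))).aestronglyMeasurable
  have hint : ∀ z : ℂ, |z.im| < 6 → Integrable (fun x : ℝ =>
      (RamanujanPhi x : ℂ) * Complex.exp (Complex.I * z * x)) := by
    intro z hz
    apply Integrable.mono' (integrable_exp_neg_mul_abs (a := 6 - |z.im|) (by linarith)) (hmeas z)
    exact Eventually.of_forall (fun x => rp_norm_le z x)
  refine ⟨hint, ?_⟩
  intro z₀ hz₀
  simp only [mem_setOf_eq] at hz₀
  set ε : ℝ := (6 - |z₀.im|) / 2 with hεdef
  have hε : 0 < ε := by simp only [hεdef]; linarith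
  have key : HasDerivAt (fun z : ℂ => ∫ x : ℝ,
      (RamanujanPhi x : ℂ) * Complex.exp (Complex.I * z * x))
      (∫ x : ℝ, (RamanujanPhi x : ℂ) * (Complex.I * x * Complex.exp (Complex.I * z₀ * x))) z₀ := by
    have := (hasDerivAt_integral_of_dominated_loc_of_deriv_le (𝕜 := ℂ)
      (F := fun (z : ℂ) (x : ℝ) => (RamanujanPhi x : ℂ) * Complex.exp (Complex.I * z * x))
      (F' := fun (z : ℂ) (x : ℝ) =>
        (RamanujanPhi x : ℂ) * (Complex.I * x * Complex.exp (Complex.I * z * x)))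
      (x₀ := z₀)
      (bound := fun x : ℝ => (2 / ε) * Real.exp (-(ε / 2 * |x|)))
      (Metric.ball_mem_nhds z₀ hε) (Eventually.of_forall fun z => hmeas z) (hint z₀ hz₀)
      ?_ ?_ ?_ ?_)
    · exact this.2
    · exact ((Complex.continuous_ofReal.comp_stronglyMeasurable rp_sm).mul
        (Continuous.stronglyMeasurable (by fun_prop))).aestronglyMeasurable
    · apply Eventually.of_forall
      intro x z hzball
      have him : |z.im| ≤ |z₀.im| + ε := by
        have h1 : |z.im - z₀.im| ≤ ‖z - z₀‖ := by
          simpa using Complex.abs_im_le_norm (z - z₀)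
        have h2 : ‖z - z₀‖ < ε := by
          rwa [Metric.mem_ball, dist_eq_norm] at hzball
        calc |z.im| ≤ |z₀.im| + |z.im - z₀.im| := by
              have := abs_sub_abs_le_abs_sub z.im z₀.im; linarith [abs_sub_abs_le_abs_sub z.im z₀.im]
          _ ≤ |z₀.im| + ε := by linarith
      have h6 : 6 - |z.im| ≥ ε := by
        simp only [hεdef] at him ⊢; linarith
      have hb1 : ‖(RamanujanPhi x : ℂ) * (Complex.I * x * Complex.exp (Complex.I * z * x))‖
          ≤ |x| * Real.exp (-((6 - |z.im|) * |x|)) := by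
        have : ‖(RamanujanPhi x : ℂ) * (Complex.I * x * Complex.exp (Complex.I * z * x))‖
            = |x| * ‖(RamanujanPhi x : ℂ) * Complex.exp (Complex.I * z * x)‖ := by
          simp only [norm_mul, Complex.norm_I, one_mul, Complex.norm_real, Real.norm_eq_abs]
          ring
        rw [this]
        exact mul_le_mul_of_nonneg_left (rp_norm_le z x) (abs_nonneg x)
      refine hb1.trans ?_
      have hstep : |x| * Real.exp (-((6 - |z.im|) * |x|)) ≤ |x| * Real.exp (-(ε * |x|)) := by
        apply mul_le_mul_of_nonneg_left _ (abs_nonneg x)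
        apply Real.exp_le_exp.mpr
        nlinarith [abs_nonneg x]
      refine hstep.trans ?_
      -- |x| * exp(-(ε|x|)) ≤ (2/ε) exp(-(ε/2 |x|))
      have hx2 : |x| ≤ (2 / ε) * Real.exp (ε / 2 * |x|) := by
        have h := Real.add_one_le_exp (ε / 2 * |x|)
        have h2 : ε / 2 * |x| ≤ Real.exp (ε / 2 * |x|) := by linarith
        calc |x| = (2 / ε) * (ε / 2 * |x|) := by field_simp
          _ ≤ (2 / ε) * Real.exp (ε / 2 * |x|) := by
              apply mul_le_mul_of_nonneg_left h2 (by positivity)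
      calc |x| * Real.exp (-(ε * |x|))
          ≤ ((2 / ε) * Real.exp (ε / 2 * |x|)) * Real.exp (-(ε * |x|)) :=
            mul_le_mul_of_nonneg_right hx2 (Real.exp_pos _).le
        _ = (2 / ε) * Real.exp (-(ε / 2 * |x|)) := by
            rw [mul_assoc, ← Real.exp_add]; ring_nf
    · exact (integrable_exp_neg_mul_abs (a := ε / 2) (by positivity)).const_mul _
    · apply Eventually.of_forall
      intro x z _
      have h : HasDerivAt (fun z : ℂ => Complex.I * z * (x : ℂ)) (Complex.I * x) z := by
        simpa using ((hasDerivAt_id z).const_mul Complex.I).mul_const (x : ℂ)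
      have h2 := (h.cexp).const_mul (RamanujanPhi x : ℂ)
      convert h2 using 1
      · rfl
      ring
  exact key.differentiableAt.differentiableWithinAt
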